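/- The softmax map from ℝ^d to the probability simplex is 1-Lipschitz with respect to the Euclidean norm: for all u, v ∈ ℝ^d, ‖softmax(u) − softmax(v)‖₂ ≤ ‖u − v‖₂. -/

import Mathlib

open Finset Real

noncomputable def softmax {d : ℕ} (u : Fin d → ℝ) : Fin d → ℝ :=
  fun i => Real.exp (u i) / ∑ j, Real.exp (u j)

/-- Key algebraic bound: the softmax Jacobian applied to `w` has squared norm
at most `‖w‖²`. -/
lemma softmax_jac_bound {d : ℕ} (p w : Fin d → ℝ) (hp : ∀ i, 0 ≤ p i)
    (hs : ∑ i, p i = 1) :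
    ∑ i, (p i * w i - p i * (∑ j, p j * w j)) ^ 2 ≤ ∑ i, w i ^ 2 := by
  set c := ∑ j, p j * w j with hc
  have hple : ∀ i, p i ≤ 1 := by
    intro i
    calc p i ≤ ∑ j, p j := Finset.single_le_sum (fun j _ => hp j) (Finset.mem_univ i)
      _ = 1 := hs
  calc ∑ i, (p i * w i - p i * c) ^ 2
      = ∑ i, p i ^ 2 * (w i - c) ^ 2 := by
        apply Finset.sum_congr rfl; intro i _; ring
    _ ≤ ∑ i, p i * (w i - c) ^ 2 := by
        apply Finset.sum_le_sum; intro i _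
        apply mul_le_mul_of_nonneg_right _ (sq_nonneg _)
        nlinarith [hp i, hple i]
    _ = (∑ i, p i * w i ^ 2) - c ^ 2 := by
        have h : ∑ i, p i * (w i - c) ^ 2
            = ∑ i, (p i * w i ^ 2 - 2 * c * (p i * w i) + c ^ 2 * p i) := by
          apply Finset.sum_congr rfl; intro i _; ring
        rw [h, Finset.sum_add_distrib, Finset.sum_sub_distrib, ← Finset.mul_sum,
          ← Finset.mul_sum, hs, ← hc]
        ring
    _ ≤ ∑ i, p i * w i ^ 2 := by nlinarith [sq_nonneg c]
    _ ≤ ∑ i, w i ^ 2 := by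
        apply Finset.sum_le_sum; intro i _
        nlinarith [hple i, sq_nonneg (w i)]

theorem softmax_one_lipschitz_l2 {d : ℕ} (u v : Fin d → ℝ) :
    Real.sqrt (∑ i, (softmax u i - softmax v i) ^ 2)
      ≤ Real.sqrt (∑ i, (u i - v i) ^ 2) := by
  rcases Nat.eq_zero_or_pos d with hd | hd
  · subst hd; simp
  set w : Fin d → ℝ := fun j => u j - v j with hw
  set e : Fin d → ℝ := fun i => softmax u i - softmax v i with he
  set S : ℝ → ℝ := fun t => ∑ j, Real.exp (v j + t * w j) with hS
  have hSpos : ∀ t, 0 < S t := by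
    intro t
    apply Finset.sum_pos (fun j _ => Real.exp_pos _)
    exact Finset.univ_nonempty_iff.mpr ⟨⟨0, hd⟩⟩
  set p : ℝ → Fin d → ℝ := fun t i => Real.exp (v i + t * w i) / S t with hp
  have hpnn : ∀ t i, 0 ≤ p t i := fun t i =>
    div_nonneg (Real.exp_pos _).le (hSpos t).le
  have hpsum : ∀ t, ∑ i, p t i = 1 := by
    intro t
    rw [hp]
    simp only
    rw [← Finset.sum_div]
    exact div_self (hSpos t).ne'
  set φ : ℝ → ℝ := fun t => ∑ i, p t i * e i with hφ
  set D : ℝ → ℝ := fun t => ∑ i, (p t i * w i - p t i * (∑ j, p t j * w j)) * e i with hD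
  -- derivative of φ
  have hderiv : ∀ t : ℝ, HasDerivAt φ (D t) t := by
    intro t
    have hSd : HasDerivAt S (∑ j, Real.exp (v j + t * w j) * w j) t := by
      apply HasDerivAt.fun_sum
      intro j _
      have hlin : HasDerivAt (fun s : ℝ => v j + s * w j) (w j) t := by
        simpa using ((hasDerivAt_id t).mul_const (w j)).const_add (v j)
      simpa using hlin.exp
    have key : ∀ i : Fin d, HasDerivAt (fun s => p s i)
        (p t i * w i - p t i * (∑ j, p t j * w j)) t := by
      intro i
      have hlin : HasDerivAt (fun s : ℝ => v i + s * w i) (w i) t := by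
        simpa using ((hasDerivAt_id t).mul_const (w i)).const_add (v i)
      have hnum : HasDerivAt (fun s : ℝ => Real.exp (v i + s * w i))
          (Real.exp (v i + t * w i) * w i) t := by simpa using hlin.exp
      have hdiv := hnum.div hSd (hSpos t).ne'
      convert hdiv using 1
      · rfl
      · rfl
      · rfl
      have hSne : S t ≠ 0 := (hSpos t).ne'
      rw [hp]
      simp only
      have hcsum : ∑ x, Real.exp (v x + t * w x) / S t * w x
          = (∑ j, Real.exp (v j + t * w j) * w j) / S t := by
        rw [Finset.sum_div]
        apply Finset.sum_congr rfl; intro j _; ring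
      rw [hcsum]
      field_simp
    have hsum := HasDerivAt.fun_sum (fun i (_ : i ∈ Finset.univ) => (key i).mul_const (e i))
    simpa [hφ, hD] using hsum
  -- bound on the derivative
  set A := Real.sqrt (∑ i, e i ^ 2) with hA
  set W := Real.sqrt (∑ i, w i ^ 2) with hW
  have hWnn : 0 ≤ W := Real.sqrt_nonneg _
  have hAnn : 0 ≤ A := Real.sqrt_nonneg _
  have hbound : ∀ t : ℝ, |D t| ≤ W * A := by
    intro t
    set q : Fin d → ℝ := fun i => p t i * w i - p t i * (∑ j, p t j * w j) with hq
    have hcs : (∑ i, q i * e i) ^ 2 ≤ (∑ i, q i ^ 2) * ∑ i, e i ^ 2 :=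
      Finset.sum_mul_sq_le_sq_mul_sq Finset.univ q e
    have hqb : ∑ i, q i ^ 2 ≤ ∑ i, w i ^ 2 :=
      softmax_jac_bound (p t) w (hpnn t) (hpsum t)
    have h1 : (D t) ^ 2 ≤ (∑ i, w i ^ 2) * ∑ i, e i ^ 2 := by
      calc (D t) ^ 2 = (∑ i, q i * e i) ^ 2 := by rw [hD]
        _ ≤ (∑ i, q i ^ 2) * ∑ i, e i ^ 2 := hcs
        _ ≤ (∑ i, w i ^ 2) * ∑ i, e i ^ 2 :=
            mul_le_mul_of_nonneg_right hqb (Finset.sum_nonneg fun i _ => sq_nonneg _)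
    have h2 := Real.sqrt_le_sqrt h1
    rwa [Real.sqrt_sq_eq_abs, Real.sqrt_mul (Finset.sum_nonneg fun i _ => sq_nonneg _),
      ← hA, ← hW] at h2
  -- mean value inequality on [0,1]
  have hmvt : |φ 1 - φ 0| ≤ W * A := by
    have := norm_image_sub_le_of_norm_deriv_le_segment_01'
      (f := φ) (f' := D) (C := W * A)
      (fun x _ => (hderiv x).hasDerivWithinAt)
      (fun x _ => hbound x)
    simpa using this
  -- identify φ 1 - φ 0 with ∑ e²
  have hφ1 : φ 1 = ∑ i, softmax u i * e i := by
    rw [hφ, hp]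
    apply Finset.sum_congr rfl
    intro i _
    have hv : ∀ j, v j + 1 * w j = u j := by intro j; rw [hw]; ring
    simp only [hS, hv, softmax]
  have hφ0 : φ 0 = ∑ i, softmax v i * e i := by
    rw [hφ, hp]
    apply Finset.sum_congr rfl
    intro i _
    have hv : ∀ j, v j + 0 * w j = v j := by intro j; ring
    simp only [hS, hv, softmax]
  have hdiff : φ 1 - φ 0 = ∑ i, e i ^ 2 := by
    rw [hφ1, hφ0, ← Finset.sum_sub_distrib]
    apply Finset.sum_congr rfl
    intro i _
    rw [he]
    ring
  have hEsq : ∑ i, e i ^ 2 ≤ W * A := by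
    calc ∑ i, e i ^ 2 = φ 1 - φ 0 := hdiff.symm
      _ ≤ |φ 1 - φ 0| := le_abs_self _
      _ ≤ W * A := hmvt
  have hA2 : A ^ 2 = ∑ i, e i ^ 2 :=
    Real.sq_sqrt (Finset.sum_nonneg fun i _ => sq_nonneg _)
  -- conclude A ≤ W
  have : A ≤ W := by
    rcases eq_or_lt_of_le hAnn with h0 | h0
    · rw [← h0]; exact hWnn
    · have : A * A ≤ W * A := by rw [← sq, hA2]; exact hEsq
      exact le_of_mul_le_mul_right this h0
  exact this
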